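/- Let φ ∈ C²(Ω) be positive, η ∈ C²(Ω). Then Δ(η²/φ)·Δφ = [−(η/φ·Δφ − Δη)² + (Δη)²] + 2(Δφ/φ)·|∇η − (η/φ)∇φ|² pointwise on Ω. -/

import Mathlib

open MeasureTheory

noncomputable def lap {d : ℕ} (f : EuclideanSpace ℝ (Fin d) → ℝ)
    (x : EuclideanSpace ℝ (Fin d)) : ℝ :=
  ∑ i : Fin d, fderiv ℝ (fun y => fderiv ℝ f y (EuclideanSpace.single i 1)) x
    (EuclideanSpace.single i 1)

private lemma grad_inner' {d : ℕ} (f : EuclideanSpace ℝ (Fin d) → ℝ)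
    (x v : EuclideanSpace ℝ (Fin d)) :
    (inner ℝ (gradient f x) v : ℝ) = fderiv ℝ f x v := by
  rw [gradient, InnerProductSpace.toDual_symm_apply]

private lemma dirDeriv' {E : Type*} [NormedAddCommGroup E] [NormedSpace ℝ E]
    {F : E → ℝ} {L : E →L[ℝ] ℝ} {x : E} (v : E) (h : HasFDerivAt F L x) :
    HasDerivAt (fun t : ℝ => F (x + t • v)) (L v) 0 := by
  have hline : HasDerivAt (fun t : ℝ => x + t • v) v 0 := by
    simpa using ((hasDerivAt_id (0:ℝ)).smul_const v).const_add x
  have h' : HasFDerivAt F L (x + (0:ℝ) • v) := by simpa using h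
  exact h'.comp_hasDerivAt 0 hline

theorem stmt_1 {d : ℕ} (Ω : Set (EuclideanSpace ℝ (Fin d))) (hΩ : IsOpen Ω)
    (φ η : EuclideanSpace ℝ (Fin d) → ℝ)
    (hφ : ContDiffOn ℝ 2 φ Ω) (hη : ContDiffOn ℝ 2 η Ω)
    (hφpos : ∀ x ∈ Ω, 0 < φ x) :
    ∀ x ∈ Ω,
      lap (fun y => (η y) ^ 2 / φ y) x * lap φ x =
        (-(η x / φ x * lap φ x - lap η x) ^ 2 + (lap η x) ^ 2)
          + 2 * (lap φ x / φ x) *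
            ‖gradient η x - (η x / φ x) • gradient φ x‖ ^ 2 := by
  intro x hx
  set e : Fin d → EuclideanSpace ℝ (Fin d) := fun i => EuclideanSpace.single i 1 with he
  -- Level A: first derivative of η²/φ on Ω
  have hA : ∀ y ∈ Ω, ∀ i : Fin d, fderiv ℝ (fun z => η z ^ 2 / φ z) y (e i) =
      (2 * η y * fderiv ℝ η y (e i) * φ y
        - η y ^ 2 * fderiv ℝ φ y (e i)) / (φ y) ^ 2 := by
    intro y hy i
    have hmem := hΩ.mem_nhds hy
    have hb0 : φ y ≠ 0 := ne_of_gt (hφpos y hy)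
    have hηy : DifferentiableAt ℝ η y :=
      (hη.differentiableOn (by norm_num)).differentiableAt hmem
    have hφy : DifferentiableAt ℝ φ y :=
      (hφ.differentiableOn (by norm_num)).differentiableAt hmem
    have hGy : DifferentiableAt ℝ (fun z => η z ^ 2 / φ z) y := by
      simp only [div_eq_mul_inv]
      exact (hηy.pow 2).mul (hφy.inv hb0)
    have hd1 : HasDerivAt (fun t : ℝ => η (y + t • e i) ^ 2 / φ (y + t • e i))
        (fderiv ℝ (fun z => η z ^ 2 / φ z) y (e i)) 0 := dirDeriv' (e i) hGy.hasFDerivAt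
    have hp : HasDerivAt (fun t : ℝ => η (y + t • e i)) (fderiv ℝ η y (e i)) 0 :=
      dirDeriv' (e i) hηy.hasFDerivAt
    have hr : HasDerivAt (fun t : ℝ => φ (y + t • e i)) (fderiv ℝ φ y (e i)) 0 :=
      dirDeriv' (e i) hφy.hasFDerivAt
    have hd2 := (hp.pow 2).div hr (by simpa using hb0)
    have := hd1.unique hd2
    simp only [zero_smul, add_zero, Pi.pow_apply] at this
    rw [this]; push_cast; ring
  -- data at x
  have hmem := hΩ.mem_nhds hx
  have hb0 : φ x ≠ 0 := ne_of_gt (hφpos x hx)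
  have hηx : DifferentiableAt ℝ η x :=
    (hη.differentiableOn (by norm_num)).differentiableAt hmem
  have hφx : DifferentiableAt ℝ φ x :=
    (hφ.differentiableOn (by norm_num)).differentiableAt hmem
  have hη1 : ContDiffOn ℝ 1 (fderiv ℝ η) Ω := hη.fderiv_of_isOpen hΩ (by norm_num)
  have hφ1 : ContDiffOn ℝ 1 (fderiv ℝ φ) Ω := hφ.fderiv_of_isOpen hΩ (by norm_num)
  have hDη : DifferentiableAt ℝ (fderiv ℝ η) x :=
    (hη1.differentiableOn (by norm_num)).differentiableAt hmem
  have hDφ : DifferentiableAt ℝ (fderiv ℝ φ) x :=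
    (hφ1.differentiableOn (by norm_num)).differentiableAt hmem
  -- second derivative components
  have key : ∀ i : Fin d,
      fderiv ℝ (fun y => fderiv ℝ (fun z => η z ^ 2 / φ z) y (e i)) x (e i) =
      (2 * (fderiv ℝ η x (e i)) ^ 2
        + 2 * η x * fderiv ℝ (fun y => fderiv ℝ η y (e i)) x (e i)) / φ x
      - 4 * η x * fderiv ℝ η x (e i) * fderiv ℝ φ x (e i) / (φ x) ^ 2
      - (η x) ^ 2 * fderiv ℝ (fun y => fderiv ℝ φ y (e i)) x (e i) / (φ x) ^ 2
      + 2 * (η x) ^ 2 * (fderiv ℝ φ x (e i)) ^ 2 / (φ x) ^ 3 := by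
    intro i
    have hDηi : DifferentiableAt ℝ (fun y => fderiv ℝ η y (e i)) x :=
      hDη.clm_apply (differentiableAt_const _)
    have hDφi : DifferentiableAt ℝ (fun y => fderiv ℝ φ y (e i)) x :=
      hDφ.clm_apply (differentiableAt_const _)
    have hgdiff : DifferentiableAt ℝ (fun y =>
        (2 * η y * fderiv ℝ η y (e i) * φ y
          - η y ^ 2 * fderiv ℝ φ y (e i)) / (φ y) ^ 2) x := by
      simp only [div_eq_mul_inv]
      exact ((((differentiableAt_const (2:ℝ)).mul hηx).mul hDηi).mul hφx |>.sub
        ((hηx.pow 2).mul hDφi)).mul ((hφx.pow 2).inv (pow_ne_zero 2 hb0))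
    have hfd_eq : fderiv ℝ (fun y => fderiv ℝ (fun z => η z ^ 2 / φ z) y (e i)) x =
        fderiv ℝ (fun y => (2 * η y * fderiv ℝ η y (e i) * φ y
          - η y ^ 2 * fderiv ℝ φ y (e i)) / (φ y) ^ 2) x :=
      Filter.EventuallyEq.fderiv_eq
        (Filter.eventuallyEq_of_mem hmem fun y hy => hA y hy i)
    have hd1 : HasDerivAt (fun t : ℝ =>
        (2 * η (x + t • e i) * fderiv ℝ η (x + t • e i) (e i) * φ (x + t • e i)
          - η (x + t • e i) ^ 2 * fderiv ℝ φ (x + t • e i) (e i)) / (φ (x + t • e i)) ^ 2)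
        (fderiv ℝ (fun y => (2 * η y * fderiv ℝ η y (e i) * φ y
          - η y ^ 2 * fderiv ℝ φ y (e i)) / (φ y) ^ 2) x (e i)) 0 :=
      dirDeriv' (e i) hgdiff.hasFDerivAt
    have hp : HasDerivAt (fun t : ℝ => η (x + t • e i)) (fderiv ℝ η x (e i)) 0 :=
      dirDeriv' (e i) hηx.hasFDerivAt
    have hq : HasDerivAt (fun t : ℝ => fderiv ℝ η (x + t • e i) (e i))
        (fderiv ℝ (fun y => fderiv ℝ η y (e i)) x (e i)) 0 :=
      dirDeriv' (e i) hDηi.hasFDerivAt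
    have hr : HasDerivAt (fun t : ℝ => φ (x + t • e i)) (fderiv ℝ φ x (e i)) 0 :=
      dirDeriv' (e i) hφx.hasFDerivAt
    have hs : HasDerivAt (fun t : ℝ => fderiv ℝ φ (x + t • e i) (e i))
        (fderiv ℝ (fun y => fderiv ℝ φ y (e i)) x (e i)) 0 :=
      dirDeriv' (e i) hDφi.hasFDerivAt
    have hd2 := ((((hp.const_mul 2).mul hq).mul hr).sub ((hp.pow 2).mul hs)).div
      (hr.pow 2) (by simpa using pow_ne_zero 2 hb0)
    have := hd1.unique hd2
    simp only [zero_smul, add_zero, Pi.pow_apply, Pi.mul_apply, Pi.sub_apply] at this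
    rw [hfd_eq, this]
    field_simp
    ring
  have hsingle : ∀ i : Fin d, EuclideanSpace.single i (1:ℝ) = e i := fun i => by rw [he]
  have hcomp : ∀ (h : EuclideanSpace ℝ (Fin d) → ℝ) (i : Fin d),
      (gradient h x) i = fderiv ℝ h x (e i) := by
    intro h i
    rw [← grad_inner']
    simp only [he]
    rw [EuclideanSpace.inner_single_right]
    simp
  have hnorm : ‖gradient η x - (η x / φ x) • gradient φ x‖ ^ 2 =
      ∑ i : Fin d, (fderiv ℝ η x (e i) - (η x / φ x) * fderiv ℝ φ x (e i)) ^ 2 := by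
    rw [← real_inner_self_eq_norm_sq]
    simp only [PiLp.inner_apply, PiLp.sub_apply, PiLp.smul_apply, smul_eq_mul,
      RCLike.inner_apply, conj_trivial]
    exact Finset.sum_congr rfl fun i _ => by rw [hcomp, hcomp]; ring
  have hlapG : lap (fun y => (η y) ^ 2 / φ y) x =
      2 * (η x / φ x) * lap η x - (η x / φ x) ^ 2 * lap φ x
        + (2 / φ x) * ∑ i : Fin d,
            (fderiv ℝ η x (e i) - (η x / φ x) * fderiv ℝ φ x (e i)) ^ 2 := by
    simp only [lap, hsingle, Finset.mul_sum]
    rw [← Finset.sum_sub_distrib, ← Finset.sum_add_distrib]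
    refine Finset.sum_congr rfl fun i _ => ?_
    rw [key i]
    field_simp
    ring
  rw [hlapG, hnorm]
  ring
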